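/- Let X be a real Hilbert space and F : X → X* Lipschitz continuous with constant L_F > 0. Assume for each u ∈ X there is a linear map F'(u) : X → X* with ⟨F'(u)v, v⟩ ≥ α_{F'}‖v‖_X² for all v ∈ X (α_{F'} > 0 independent of u), and that there is a functional H : X → ℝ such that for all u, v ∈ X the function t ↦ H(u + t v) is differentiable with derivative t ↦ ⟨F(u + t v), v⟩ (i.e. H' = F in the Gâteaux sense). Let δ_max satisfy 0 < δ_max < 2α_{F'}/L_F and let {uⁿ}ₙ₌₀^∞ ⊆ X and δⁿ ∈ (0, δ_max] satisfy the damped Newton relation ⟨F'(uⁿ)uⁿ⁺¹, v⟩ = ⟨F'(uⁿ)uⁿ, v⟩ − δⁿ⟨F(uⁿ), v⟩ for all v ∈ X and n ≥ 0. Then for every n ≥ 0, H(uⁿ) − H(uⁿ⁺¹) ≥ C‖uⁿ⁺¹ − uⁿ‖_X², where C := α_{F'}/δ_max − L_F/2 > 0. -/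

import Mathlib

/-- Energy decay of the damped Newton iteration: the potential `H` (with
`H' = F` in the Gâteaux sense) decreases by at least
`C‖uⁿ⁺¹ - uⁿ‖²` per step, where `C = α_{F'}/δ_max - L_F/2 > 0`. -/
theorem damped_newton_energy_decay
    {X : Type*} [NormedAddCommGroup X] [InnerProductSpace ℝ X] [CompleteSpace X]
    (F : X → X →L[ℝ] ℝ) (L : ℝ) (hL : 0 < L)
    (hlip : ∀ u v w : X, |F u w - F v w| ≤ L * ‖u - v‖ * ‖w‖)
    (F' : X → X →L[ℝ] X →L[ℝ] ℝ)
    (αF' : ℝ) (hαF' : 0 < αF')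
    (hF'coer : ∀ u v : X, αF' * ‖v‖ ^ 2 ≤ F' u v v)
    (H : X → ℝ)
    (hH' : ∀ u v : X, ∀ t : ℝ,
      HasDerivAt (fun s : ℝ => H (u + s • v)) (F (u + t • v) v) t)
    (δmax : ℝ) (hδmax0 : 0 < δmax) (hδmax : δmax < 2 * αF' / L)
    (u : ℕ → X) (δ : ℕ → ℝ)
    (hδ : ∀ n : ℕ, 0 < δ n ∧ δ n ≤ δmax)
    (hiter : ∀ n : ℕ, ∀ v : X,
      F' (u n) (u (n + 1)) v = F' (u n) (u n) v - δ n * F (u n) v) :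
    0 < αF' / δmax - L / 2 ∧
    ∀ n : ℕ, H (u n) - H (u (n + 1)) ≥
      (αF' / δmax - L / 2) * ‖u (n + 1) - u n‖ ^ 2 := by
  have hLδ : δmax * L < 2 * αF' := (lt_div_iff₀ hL).mp hδmax
  have hC : 0 < αF' / δmax - L / 2 := by
    rw [sub_pos, div_lt_div_iff₀ (by norm_num) hδmax0]
    linarith
  refine ⟨hC, fun n => ?_⟩
  set d : X := u (n + 1) - u n with hd
  set φ : ℝ → ℝ := fun t => F (u n + t • d) d with hφ
  -- φ is Lipschitz, hence continuous
  have hlipφ : LipschitzWith (Real.toNNReal (L * ‖d‖ ^ 2)) φ := by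
    apply LipschitzWith.of_dist_le_mul
    intro s t
    simp only [Real.dist_eq, hφ]
    calc |F (u n + s • d) d - F (u n + t • d) d|
        ≤ L * ‖(u n + s • d) - (u n + t • d)‖ * ‖d‖ := hlip _ _ _
      _ = L * ‖d‖ ^ 2 * |s - t| := by
          have h1 : (u n + s • d) - (u n + t • d) = (s - t) • d := by
            rw [sub_smul]; abel
          rw [h1, norm_smul, Real.norm_eq_abs]; ring
      _ ≤ (Real.toNNReal (L * ‖d‖ ^ 2) : ℝ) * |s - t| := by
          rw [Real.coe_toNNReal _ (by positivity)]
  have hφcont : Continuous φ := hlipφ.continuous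
  -- FTC
  have hFTC : ∫ t in (0:ℝ)..1, φ t = H (u (n + 1)) - H (u n) := by
    have := intervalIntegral.integral_eq_sub_of_hasDerivAt
      (f := fun s : ℝ => H (u n + s • d)) (f' := φ)
      (a := (0:ℝ)) (b := 1)
      (fun t _ => hH' (u n) d t) (hφcont.intervalIntegrable 0 1)
    simpa [hd] using this
  -- pointwise bound on φ
  have hb : ∀ t ∈ Set.Icc (0:ℝ) 1, φ t ≤ φ 0 + L * ‖d‖ ^ 2 * t := by
    intro t ht
    have h0 : φ 0 = F (u n) d := by simp [hφ]
    have h := hlip (u n + t • d) (u n) d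
    have h2 : ‖(u n + t • d) - u n‖ = |t| * ‖d‖ := by
      rw [add_sub_cancel_left, norm_smul, Real.norm_eq_abs]
    rw [h2, abs_of_nonneg ht.1] at h
    have h3 := (abs_le.mp h).2
    rw [h0]
    nlinarith [h3]
  -- integral bound
  have hint : ∫ t in (0:ℝ)..1, φ t ≤ φ 0 + L * ‖d‖ ^ 2 / 2 := by
    have hmono := intervalIntegral.integral_mono_on (μ := MeasureTheory.volume) (a := (0:ℝ)) (b := 1)
      (by norm_num) (hφcont.intervalIntegrable 0 1)
      (((continuous_const.add (continuous_const.mul continuous_id)).intervalIntegrable 0 1))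
      hb
    have hval : ∫ t in (0:ℝ)..1, (φ 0 + L * ‖d‖ ^ 2 * t) = φ 0 + L * ‖d‖ ^ 2 / 2 := by
      rw [intervalIntegral.integral_add (f := fun _ => φ 0) (g := fun t => L * ‖d‖ ^ 2 * t) (continuous_const.intervalIntegrable 0 1)
        ((continuous_const.mul continuous_id').intervalIntegrable 0 1),
        intervalIntegral.integral_const_mul, integral_id]
      simp
      ring
    calc ∫ t in (0:ℝ)..1, φ t ≤ ∫ t in (0:ℝ)..1, (φ 0 + L * ‖d‖ ^ 2 * t) := hmono
      _ = φ 0 + L * ‖d‖ ^ 2 / 2 := hval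
  -- iteration relation
  have hkey : F' (u n) d d = -(δ n * F (u n) d) := by
    have h1 : F' (u n) d d = F' (u n) (u (n + 1)) d - F' (u n) (u n) d := by
      rw [hd, map_sub]; simp only [ContinuousLinearMap.sub_apply, map_sub]; ring
    rw [h1, hiter n d]; ring
  have hcoer : αF' * ‖d‖ ^ 2 ≤ -(δ n * F (u n) d) := hkey ▸ hF'coer (u n) d
  obtain ⟨hδn0, hδnmax⟩ := hδ n
  have hFneg : -(F (u n) d) ≥ 0 := by
    by_contra h
    push_neg at h
    nlinarith [sq_nonneg ‖d‖]
  have hφ0 : -(φ 0) ≥ αF' / δmax * ‖d‖ ^ 2 := by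
    have h0 : φ 0 = F (u n) d := by simp [hφ]
    rw [h0, ge_iff_le, div_mul_eq_mul_div, div_le_iff₀ hδmax0]
    nlinarith
  have hHdiff : H (u n) - H (u (n + 1)) = -(∫ t in (0:ℝ)..1, φ t) := by
    rw [hFTC]; ring
  rw [hHdiff]
  nlinarith [hint, hφ0]
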